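/- arXiv:1502.03788 — 6 statements merged into one kernel-verified Lean document; each statement's English description precedes it below -/
import Mathlib

section
/- Let e be an extremal point of the attractor F and let a : ℕ → {1,…,n} be an infinite address of e, meaning e ∈ T_{a|L}(F) for every L ∈ ℕ, where a|L denotes the length-L prefix of a. If e is not eventually periodic, then the inverse iterates T_{a|L}⁻¹(e), L = 0, 1, 2, …, are pairwise distinct extremal points of F; in particular Ext(F) is infinite. -/
open Complex

noncomputable section

/-- Composition of IFS maps along a finite word: `T_a = T_{a₁} ∘ ⋯ ∘ T_{a_L}`. -/
def wordMap {n : ℕ} (T : Fin n → ℂ → ℂ) : List (Fin n) → ℂ → ℂ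
  | [] => id
  | k :: a => T k ∘ wordMap T a

/-- Product of factors along a finite word: `φ_a = φ_{a₁} ⋯ φ_{a_L}`. -/
def wordFactor {n : ℕ} (φ : Fin n → ℂ) (a : List (Fin n)) : ℂ :=
  (a.map φ).prod

/-- `e` is an extremal point of `S`: it belongs to `S` and does not lie in the open
segment between any two distinct points of `S`. -/
def IsExtremal (S : Set ℂ) (e : ℂ) : Prop :=
  e ∈ S ∧ ¬ ∃ s₁ s₂ : ℂ, s₁ ∈ S ∧ s₂ ∈ S ∧ s₁ ≠ s₂ ∧
    ∃ t : ℝ, 0 < t ∧ t < 1 ∧ e = t • s₁ + (1 - t) • s₂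

section Aux

variable {n : ℕ} {p φ : Fin n → ℂ} {T : Fin n → ℂ → ℂ}

lemma wordFactor_cons (k : Fin n) (x : List (Fin n)) :
    wordFactor φ (k :: x) = φ k * wordFactor φ x := by
  simp [wordFactor]

lemma wordMap_append (x y : List (Fin n)) (z : ℂ) :
    wordMap T (x ++ y) z = wordMap T x (wordMap T y z) := by
  induction x with
  | nil => rfl
  | cons k x ih => simp [wordMap, ih]

lemma wordMap_sub (hT : ∀ k z, T k z = p k + φ k * (z - p k))
    (x : List (Fin n)) (z w : ℂ) :
    wordMap T x z - wordMap T x w = wordFactor φ x * (z - w) := by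
  induction x with
  | nil => simp [wordMap, wordFactor]
  | cons k x ih =>
    simp only [wordMap, Function.comp_apply, hT, wordFactor_cons]
    rw [show p k + φ k * (wordMap T x z - p k) - (p k + φ k * (wordMap T x w - p k))
        = φ k * (wordMap T x z - wordMap T x w) by ring, ih]
    ring

lemma wordFactor_ne_zero (hφ : ∀ k, 0 < ‖φ k‖ ∧ ‖φ k‖ < 1)
    (x : List (Fin n)) : wordFactor φ x ≠ 0 := by
  induction x with
  | nil => simp [wordFactor]
  | cons k x ih =>
    rw [wordFactor_cons]
    exact mul_ne_zero (norm_pos_iff.mp (hφ k).1) ih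

lemma abs_wordFactor_le_one (hφ : ∀ k, 0 < ‖φ k‖ ∧ ‖φ k‖ < 1)
    (x : List (Fin n)) : ‖wordFactor φ x‖ ≤ 1 := by
  induction x with
  | nil => simp [wordFactor]
  | cons k x ih =>
    rw [wordFactor_cons, norm_mul]
    calc ‖φ k‖ * ‖wordFactor φ x‖
        ≤ 1 * 1 := mul_le_mul (le_of_lt (hφ k).2) ih (norm_nonneg _) zero_le_one
      _ = 1 := one_mul 1

lemma abs_wordFactor_lt_one (hφ : ∀ k, 0 < ‖φ k‖ ∧ ‖φ k‖ < 1)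
    (x : List (Fin n)) (hx : x ≠ []) : ‖wordFactor φ x‖ < 1 := by
  cases x with
  | nil => exact absurd rfl hx
  | cons k x =>
    rw [wordFactor_cons, norm_mul]
    calc ‖φ k‖ * ‖wordFactor φ x‖
        ≤ ‖φ k‖ * 1 :=
          mul_le_mul_of_nonneg_left (abs_wordFactor_le_one hφ x) (norm_nonneg _)
      _ = ‖φ k‖ := mul_one _
      _ < 1 := (hφ k).2

lemma wordMap_injective (hT : ∀ k z, T k z = p k + φ k * (z - p k))
    (hφ : ∀ k, 0 < ‖φ k‖ ∧ ‖φ k‖ < 1)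
    (x : List (Fin n)) : Function.Injective (wordMap T x) := by
  intro z w h
  have h2 := wordMap_sub hT x z w
  rw [h, sub_self] at h2
  have h3 := (mul_eq_zero.mp h2.symm).resolve_left (wordFactor_ne_zero hφ x)
  exact sub_eq_zero.mp h3

lemma wordMap_fixed_eq (hT : ∀ k z, T k z = p k + φ k * (z - p k))
    (hφ : ∀ k, 0 < ‖φ k‖ ∧ ‖φ k‖ < 1)
    (x : List (Fin n)) (hx : x ≠ []) (z w : ℂ)
    (hz : wordMap T x z = z) (hw : wordMap T x w = w) : z = w := by
  by_contra hne
  have h := wordMap_sub hT x z w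
  rw [hz, hw] at h
  have hzw : z - w ≠ 0 := sub_ne_zero.mpr hne
  have h1 : (1 : ℂ) = wordFactor φ x :=
    mul_right_cancel₀ hzw (by rw [one_mul]; exact h)
  have := abs_wordFactor_lt_one hφ x hx
  rw [← h1] at this
  simp at this

lemma wordMap_comb (hT : ∀ k z, T k z = p k + φ k * (z - p k))
    (x : List (Fin n)) (t : ℝ) (s₁ s₂ : ℂ) :
    wordMap T x ((t : ℂ) * s₁ + (1 - (t : ℂ)) * s₂)
      = (t : ℂ) * wordMap T x s₁ + (1 - (t : ℂ)) * wordMap T x s₂ := by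
  have h1 := wordMap_sub hT x ((t : ℂ) * s₁ + (1 - (t : ℂ)) * s₂) s₂
  have h2 := wordMap_sub hT x s₁ s₂
  rw [show ((t : ℂ) * s₁ + (1 - (t : ℂ)) * s₂) - s₂ = (t : ℂ) * (s₁ - s₂) by ring] at h1
  linear_combination h1 - (t : ℂ) * h2

lemma wordMap_image_subset {F : Set ℂ} (hFinv : F = ⋃ k, T k '' F)
    (x : List (Fin n)) : wordMap T x '' F ⊆ F := by
  induction x with
  | nil => simp [wordMap]
  | cons k x ih =>
    intro z hz
    obtain ⟨w, hw, rfl⟩ := hz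
    have h1 : wordMap T x w ∈ F := ih ⟨w, hw, rfl⟩
    have h2 : T k (wordMap T x w) ∈ ⋃ j, T j '' F :=
      Set.mem_iUnion.mpr ⟨k, wordMap T x w, h1, rfl⟩
    rw [← hFinv] at h2
    exact h2

lemma extremal_pull (hT : ∀ k z, T k z = p k + φ k * (z - p k))
    (hφ : ∀ k, 0 < ‖φ k‖ ∧ ‖φ k‖ < 1)
    {F : Set ℂ} (hFinv : F = ⋃ k, T k '' F)
    {e g : ℂ} (he : IsExtremal F e) (hg : g ∈ F)
    (x : List (Fin n)) (hge : wordMap T x g = e) : IsExtremal F g := by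
  refine ⟨hg, fun ⟨s₁, s₂, h₁, h₂, hne, t, ht0, ht1, heq⟩ => he.2 ?_⟩
  refine ⟨wordMap T x s₁, wordMap T x s₂,
    wordMap_image_subset hFinv x ⟨s₁, h₁, rfl⟩,
    wordMap_image_subset hFinv x ⟨s₂, h₂, rfl⟩,
    fun h => hne (wordMap_injective hT hφ x h), t, ht0, ht1, ?_⟩
  have heq' : g = (t : ℂ) * s₁ + (1 - (t : ℂ)) * s₂ := by
    rw [heq]; push_cast [Complex.real_smul]; ring
  rw [← hge, heq', wordMap_comb hT]
  push_cast [Complex.real_smul]; ring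

end Aux

/-- if `e ∈ Ext(F)` has infinite address `a` (that is, `e ∈ T_{a|L}(F)` for each
prefix `a|L`) and `e` is not eventually periodic, then the inverse iterates
`T_{a|L}⁻¹(e)` are pairwise distinct extremal points of `F`; in particular `Ext(F)` is
infinite. -/
theorem inverse_iterates_distinct_of_not_eventually_periodic {n : ℕ} (hn : 1 ≤ n)
    (p φ : Fin n → ℂ)
    (hφ : ∀ k, 0 < ‖φ k‖ ∧ ‖φ k‖ < 1)
    (T : Fin n → ℂ → ℂ) (hT : ∀ k z, T k z = p k + φ k * (z - p k))
    (F : Set ℂ) (hFne : F.Nonempty) (hFc : IsCompact F)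
    (hFinv : F = ⋃ k, T k '' F)
    (pp : List (Fin n) → ℂ) (hpp : ∀ x, x ≠ [] → wordMap T x (pp x) = pp x)
    (e : ℂ) (he : IsExtremal F e)
    (a : ℕ → Fin n)
    (ha : ∀ L : ℕ, e ∈ wordMap T (List.ofFn fun i : Fin L => a i) '' F)
    (hnep : ¬ ∃ (c y : List (Fin n)), y ≠ [] ∧ e = wordMap T c (pp y)) :
    (∀ L : ℕ, IsExtremal F
      (Function.invFun (wordMap T (List.ofFn fun i : Fin L => a i)) e)) ∧
    (∀ L L' : ℕ, L ≠ L' →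
      Function.invFun (wordMap T (List.ofFn fun i : Fin L => a i)) e ≠
        Function.invFun (wordMap T (List.ofFn fun i : Fin L' => a i)) e) ∧
    {z | IsExtremal F z}.Infinite := by
  set w : ℕ → List (Fin n) := fun L => List.ofFn fun i : Fin L => a i with hw
  set g : ℕ → ℂ := fun L => Function.invFun (wordMap T (w L)) e with hgdef
  have hkey : ∀ L : ℕ, g L ∈ F ∧ wordMap T (w L) (g L) = e := by
    intro L
    obtain ⟨z, hzF, hze⟩ := ha L
    have hinj := wordMap_injective hT hφ (w L)
    have : g L = z := by
      show Function.invFun (wordMap T (w L)) e = z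
      rw [← hze]
      exact Function.leftInverse_invFun hinj z
    rw [this]; exact ⟨hzF, hze⟩
  have hext : ∀ L : ℕ, IsExtremal F (g L) := fun L =>
    extremal_pull hT hφ hFinv he (hkey L).1 (w L) (hkey L).2
  -- key: if L < L', then g L ≠ g L'
  have hlt : ∀ L L' : ℕ, L < L' → g L ≠ g L' := by
    intro L L' hLL heqg
    obtain ⟨d, rfl⟩ : ∃ d, L' = L + d := ⟨L' - L, (Nat.add_sub_cancel' hLL.le).symm⟩
    have hd : d ≠ 0 := by omega
    set mid : List (Fin n) := List.ofFn fun j : Fin d => a (L + j) with hmid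
    have hmidne : mid ≠ [] := by
      intro h
      have := congrArg List.length h
      simp [hmid] at this
      exact hd this
    have hsplit : w (L + d) = w L ++ mid := by
      show (List.ofFn fun i : Fin (L + d) => a i) = _
      rw [List.ofFn_add]
      congr 1 <;> simp [hw, hmid]
    have h1 := (hkey L).2
    have h2 := (hkey (L + d)).2
    rw [hsplit, wordMap_append, ← heqg] at h2
    have hfix : wordMap T mid (g L) = g L :=
      wordMap_injective hT hφ (w L) (by rw [h2, h1])
    have : g L = pp mid :=
      wordMap_fixed_eq hT hφ mid hmidne _ _ hfix (hpp mid hmidne)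
    exact hnep ⟨w L, mid, hmidne, by rw [← h1, this]⟩
  have hne : ∀ L L' : ℕ, L ≠ L' → g L ≠ g L' := by
    intro L L' h
    rcases lt_or_gt_of_ne h with h' | h'
    · exact hlt L L' h'
    · exact fun heq => hlt L' L h' heq.symm
  refine ⟨hext, hne, ?_⟩
  exact Set.infinite_of_injective_forall_mem
    (f := g) (fun L L' h => by by_contra hne'; exact hne L L' hne' h)
    (fun L => hext L)
end
end

section
/- If every factor φ_k is a real number in (0,1) (a Sierpiński fractal), then conv(F) = conv({p_1,…,p_n}); in particular every extremal point of F is one of the fixed points p_1,…,p_n. -/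
open Complex

noncomputable section

/-- if every factor `φ_k` is a real number in `(0,1)` (a Sierpiński fractal),
then `conv F = conv {p_1, …, p_n}`; in particular every extremal point of `F` is one of
the fixed points. -/
theorem sierpinski_convex_hull {n : ℕ} (hn : 1 ≤ n) (p φ : Fin n → ℂ)
    (hφ : ∀ k, 0 < ‖φ k‖ ∧ ‖φ k‖ < 1)
    (T : Fin n → ℂ → ℂ) (hT : ∀ k z, T k z = p k + φ k * (z - p k))
    (F : Set ℂ) (hFne : F.Nonempty) (hFc : IsCompact F)
    (hFinv : F = ⋃ k, T k '' F)
    (hreal : ∀ k, ∃ r : ℝ, 0 < r ∧ r < 1 ∧ φ k = (r : ℂ)) :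
    convexHull ℝ F = convexHull ℝ (Set.range p) ∧
    (∀ e, IsExtremal F e → ∃ k, e = p k) := by
  -- distance scaling
  have hdist : ∀ k z w, dist (T k z) (T k w) = ‖φ k‖ * dist z w := by
    intro k z w
    rw [Complex.dist_eq, Complex.dist_eq, hT, hT]
    rw [show p k + φ k * (z - p k) - (p k + φ k * (w - p k)) = φ k * (z - w) by ring]
    simp [map_mul]
  -- T k maps F into F
  have hTF : ∀ k, T k '' F ⊆ F := by
    intro k
    rw [hFinv]
    exact Set.subset_iUnion (fun k => T k '' (⋃ k, T k '' F)) k |>.trans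
      (by gcongr; exact le_of_eq hFinv.symm) |>.trans (le_of_eq rfl)
  -- fixed points belong to F
  have hpF : ∀ k, p k ∈ F := by
    intro k
    obtain ⟨x₀, hx₀⟩ := hFne
    set seq : ℕ → ℂ := fun m => (T k)^[m] x₀ with hseq
    have hmem : ∀ m, seq m ∈ F := by
      intro m
      induction m with
      | zero => exact hx₀
      | succ m ih =>
        have : seq (m+1) = T k (seq m) := Function.iterate_succ_apply' _ _ _
        rw [this]; exact hTF k ⟨seq m, ih, rfl⟩
    have hfix : T k (p k) = p k := by rw [hT]; ring
    have hd : ∀ m, dist (seq m) (p k) ≤ (‖φ k‖)^m * dist x₀ (p k) := by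
      intro m
      induction m with
      | zero => simp [seq]
      | succ m ih =>
        have h1 : seq (m+1) = T k (seq m) := Function.iterate_succ_apply' _ _ _
        rw [h1, show p k = T k (p k) from hfix.symm, hdist, hfix, pow_succ, mul_comm ((‖φ k‖)^m), mul_assoc]
        exact mul_le_mul_of_nonneg_left ih (norm_nonneg _)
    have htend : Filter.Tendsto seq Filter.atTop (nhds (p k)) := by
      rw [tendsto_iff_dist_tendsto_zero]
      apply squeeze_zero (fun m => dist_nonneg) hd
      rw [show (0:ℝ) = 0 * dist x₀ (p k) by ring]
      exact (tendsto_pow_atTop_nhds_zero_of_lt_one (norm_nonneg _) (hφ k).2).mul_const _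
    exact hFc.isClosed.mem_of_tendsto htend (Filter.Eventually.of_forall hmem)
  set C := convexHull ℝ (Set.range p) with hC
  have hCconv : Convex ℝ C := convex_convexHull ℝ _
  have hpC : ∀ k, p k ∈ C := fun k => subset_convexHull ℝ _ ⟨k, rfl⟩
  -- C invariant
  have hTC : ∀ k, ∀ z ∈ C, T k z ∈ C := by
    intro k z hz
    obtain ⟨r, hr0, hr1, hrk⟩ := hreal k
    have : T k z = (1 - r) • p k + r • z := by
      rw [hT, hrk]
      simp only [Complex.real_smul]
      push_cast
      ring
    rw [this]
    exact hCconv (hpC k) hz (by linarith) hr0.le (by ring)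
  have hCcpt : IsCompact C := (Set.finite_range p).isCompact_convexHull (𝕜 := ℝ)
  have hCne : C.Nonempty := ⟨p ⟨0, hn⟩, hpC _⟩
  -- F ⊆ C
  have hFC : F ⊆ C := by
    obtain ⟨z₀, hz₀F, hmax⟩ := hFc.exists_isMaxOn (f := fun z => Metric.infDist z C) hFne
      (Metric.continuous_infDist_pt C).continuousOn
    have hz0 : Metric.infDist z₀ C = 0 := by
      have hz₀' : z₀ ∈ ⋃ k, T k '' F := hFinv ▸ hz₀F
      obtain ⟨k, w, hwF, hwz⟩ := Set.mem_iUnion.mp hz₀' |>.imp (fun k hk => hk)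
      obtain ⟨c, hcC, hcd⟩ := hCcpt.exists_infDist_eq_dist hCne w
      have h1 : Metric.infDist z₀ C ≤ dist (T k w) (T k c) := by
        rw [← hwz]
        exact Metric.infDist_le_dist_of_mem (hTC k c hcC)
      rw [hdist, ← hcd] at h1
      have h2 : Metric.infDist w C ≤ Metric.infDist z₀ C := hmax hwF
      have h3 : Metric.infDist z₀ C ≤ ‖φ k‖ * Metric.infDist z₀ C :=
        h1.trans (mul_le_mul_of_nonneg_left h2 (norm_nonneg _))
      nlinarith [Metric.infDist_nonneg (x := z₀) (s := C), (hφ k).2]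
    intro z hz
    have : Metric.infDist z C = 0 :=
      le_antisymm (hz0 ▸ hmax hz) Metric.infDist_nonneg
    exact (hCcpt.isClosed.mem_iff_infDist_zero hCne).mpr this
  constructor
  · apply le_antisymm
    · exact convexHull_min hFC hCconv
    · exact convexHull_mono (Set.range_subset_iff.mpr hpF)
  · rintro e ⟨heF, hne⟩
    have he' : e ∈ ⋃ k, T k '' F := hFinv ▸ heF
    obtain ⟨k, w, hwF, hwe⟩ := Set.mem_iUnion.mp he' |>.imp (fun k hk => hk)
    by_cases hwp : w = p k
    · exact ⟨k, by rw [← hwe, hwp, hT]; ring⟩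
    · exfalso
      apply hne
      obtain ⟨r, hr0, hr1, hrk⟩ := hreal k
      refine ⟨w, p k, hwF, hpF k, hwp, r, hr0, hr1, ?_⟩
      rw [← hwe, hT, hrk]
      simp only [Complex.real_smul]
      push_cast
      ring
end
end

section
/- Extremal Theorem, part 1: let τ ∈ ℂ \ {0} and let a be a finite word over {1,…,n} such that M(τ) ⊆ T_a(F). Then M(τ) = T_a(M(conj(φ_a)·τ)). (Since conj(φ_a)·τ is a positive scalar multiple of e^{−ν(a)i}·τ, where ν(a) is the total rotation angle of T_a modulo 2π, it has the same maximizer set as e^{−ν(a)i}·τ.) -/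
open Complex

noncomputable section

/-- The set of maximizers of the target function `z ↦ ⟨τ,z⟩ = Re(conj τ · z)` over `F`. -/
def maxSet (F : Set ℂ) (τ : ℂ) : Set ℂ :=
  {z | z ∈ F ∧ ∀ w ∈ F, ((starRingEnd ℂ) τ * w).re ≤ ((starRingEnd ℂ) τ * z).re}

/-- Extremal Theorem, part 1: if `M(τ) ⊆ T_a(F)` then
`M(τ) = T_a(M(conj(φ_a)·τ))`. -/
theorem extremal_theorem_part1 {n : ℕ} (hn : 1 ≤ n) (p φ : Fin n → ℂ)
    (hφ : ∀ k, 0 < ‖φ k‖ ∧ ‖φ k‖ < 1)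
    (T : Fin n → ℂ → ℂ) (hT : ∀ k z, T k z = p k + φ k * (z - p k))
    (F : Set ℂ) (hFne : F.Nonempty) (hFc : IsCompact F)
    (hFinv : F = ⋃ k, T k '' F)
    (τ : ℂ) (hτ : τ ≠ 0) (a : List (Fin n))
    (hMa : maxSet F τ ⊆ wordMap T a '' F) :
    maxSet F τ = wordMap T a '' maxSet F ((starRingEnd ℂ) (wordFactor φ a) * τ) := by
  -- T_a is affine: wordMap T a z = c + m * z
  obtain ⟨c, hc⟩ : ∃ c, ∀ z, wordMap T a z = c + wordFactor φ a * z := by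
    clear hMa
    induction a with
    | nil => exact ⟨0, fun z => by simp [wordMap, wordFactor]⟩
    | cons k a ih =>
      obtain ⟨c, hc⟩ := ih
      refine ⟨p k + φ k * (c - p k), fun z => ?_⟩
      simp only [wordMap, Function.comp_apply, hc, hT, wordFactor, List.map_cons,
        List.prod_cons]
      ring
  -- T_a maps F into F
  have hinto : ∀ z ∈ F, wordMap T a z ∈ F := by
    clear hMa hc
    induction a with
    | nil => intro z hz; simpa [wordMap] using hz
    | cons k a ih =>
      intro z hz
      have h1 : wordMap T a z ∈ F := ih z hz
      have : T k (wordMap T a z) ∈ ⋃ k, T k '' F :=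
        Set.mem_iUnion.2 ⟨k, Set.mem_image_of_mem _ h1⟩
      simpa [wordMap, ← hFinv] using this
  set m := wordFactor φ a with hm
  set σ := (starRingEnd ℂ) m * τ with hσ
  -- key identity
  have key : ∀ z : ℂ, ((starRingEnd ℂ) τ * wordMap T a z).re
      = ((starRingEnd ℂ) τ * c).re + ((starRingEnd ℂ) σ * z).re := by
    intro z
    rw [hc z]
    simp only [hσ, map_mul, RingHom.id_apply, starRingEnd_self_apply]
    rw [mul_add, Complex.add_re]
    ring_nf
  -- M(τ) is nonempty
  have hcont : Continuous fun z : ℂ => ((starRingEnd ℂ) τ * z).re :=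
    Complex.continuous_re.comp (continuous_const.mul continuous_id)
  obtain ⟨z₀, hz₀F, hz₀max⟩ := hFc.exists_isMaxOn hFne hcont.continuousOn
  have hz₀ : z₀ ∈ maxSet F τ := ⟨hz₀F, fun w hw => hz₀max hw⟩
  ext y
  constructor
  · rintro hy
    obtain ⟨z, hzF, rfl⟩ := hMa hy
    refine ⟨z, ⟨hzF, fun w hw => ?_⟩, rfl⟩
    have := hy.2 (wordMap T a w) (hinto w hw)
    rw [key, key] at this
    linarith
  · rintro ⟨z, ⟨hzF, hzmax⟩, rfl⟩
    refine ⟨hinto z hzF, fun w hw => ?_⟩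
    obtain ⟨w₀, hw₀F, hw₀⟩ := hMa hz₀
    have h1 : ((starRingEnd ℂ) τ * w).re ≤ ((starRingEnd ℂ) τ * z₀).re := hz₀.2 w hw
    rw [← hw₀, key] at h1
    rw [key]
    linarith [hzmax w₀ hw₀F]
end
end

section
/- Continuity in Angular Parameters: fix fixed points p_1,…,p_n ∈ ℂ and moduli λ_1,…,λ_n ∈ (0,1); for θ = (θ_1,…,θ_n) ∈ (−π,π]^n let T_k[θ](z) := p_k + λ_k e^{iθ_k}(z − p_k), let F[θ] be the attractor of the IFS (T_1[θ],…,T_n[θ]), and for a finite word a over {1,…,n} let T_a[θ] denote the corresponding composition. Fix a seed p ∈ {p_1,…,p_n}, fix θ ∈ (−π,π]^n, and fix D > diam(F[θ]). Then for every ε > 0 there exists δ > 0 such that for every θ' ∈ (−π,π]^n with diam(F[θ']) < D and max_{1≤k≤n} |θ_k − θ'_k| < δ, one has sup_a |T_a[θ](p) − T_a[θ'](p)| < ε, the supremum being over all finite words a over {1,…,n}. -/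
open Complex

noncomputable section

lemma expI_lip : LipschitzWith 1 (fun s : ℝ => Complex.exp ((s : ℂ) * Complex.I)) := by
  have hd : ∀ s : ℝ, HasDerivAt (fun s : ℝ => Complex.exp ((s : ℂ) * Complex.I))
      (Complex.exp ((s : ℂ) * Complex.I) * Complex.I) s := by
    intro s
    have h1 : HasDerivAt (fun w : ℂ => Complex.exp (w * Complex.I))
        (Complex.exp ((s : ℂ) * Complex.I) * Complex.I) (s : ℂ) := by
      simpa using ((hasDerivAt_id ((s : ℂ))).mul_const Complex.I).cexp
    exact h1.comp_ofReal
  apply lipschitzWith_of_nnnorm_deriv_le (fun s => (hd s).differentiableAt)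
  intro s
  rw [(hd s).deriv]
  simp [nnnorm, Complex.norm_exp]

lemma expI_dist_le (s t : ℝ) :
    ‖Complex.exp ((s : ℂ) * Complex.I) - Complex.exp ((t : ℂ) * Complex.I)‖
      ≤ |s - t| := by
  have := expI_lip.dist_le_mul s t
  simpa [Complex.dist_eq, Real.dist_eq] using this

lemma aux_fixed_mem {n : ℕ} (p : Fin n → ℂ) (lam : Fin n → ℝ)
    (hlam : ∀ k, 0 < lam k ∧ lam k < 1) (Tθ : Fin n → ℂ → ℂ) (θ : Fin n → ℝ)
    (hT : ∀ k z, Tθ k z = p k + (lam k : ℂ) * Complex.exp ((θ k : ℂ) * Complex.I) * (z - p k))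
    (F : Set ℂ) (hne : F.Nonempty) (hc : IsCompact F) (hinv : F = ⋃ k, Tθ k '' F)
    (k : Fin n) : p k ∈ F := by
  obtain ⟨x, hx⟩ := hne
  have hsub : ∀ j : Fin n, Tθ j '' F ⊆ F := by
    intro j
    conv_rhs => rw [hinv]
    exact Set.subset_iUnion (fun j => Tθ j '' F) j
  have hmem : ∀ m : ℕ, (Tθ k)^[m] x ∈ F := by
    intro m; induction m with
    | zero => simpa
    | succ m ih => rw [Function.iterate_succ_apply']; exact hsub k ⟨_, ih, rfl⟩
  have habs : ∀ z : ℂ, ‖(lam k : ℂ) * Complex.exp ((θ k : ℂ) * Complex.I) * z‖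
      = lam k * ‖z‖ := by
    intro z
    simp [map_mul, Complex.norm_exp, abs_of_pos (hlam k).1]
  have hdist : ∀ m : ℕ, dist ((Tθ k)^[m] x) (p k) = (lam k)^m * dist x (p k) := by
    intro m; induction m with
    | zero => simp
    | succ m ih =>
      rw [Function.iterate_succ_apply', hT, Complex.dist_eq]
      have he : p k + (lam k : ℂ) * Complex.exp ((θ k : ℂ) * Complex.I) * ((Tθ k)^[m] x - p k)
          - p k = (lam k : ℂ) * Complex.exp ((θ k : ℂ) * Complex.I) * ((Tθ k)^[m] x - p k) := by
        ring
      rw [he, habs, ← Complex.dist_eq, ih, pow_succ]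
      ring
  have htend : Filter.Tendsto (fun m => (Tθ k)^[m] x) Filter.atTop (nhds (p k)) := by
    rw [tendsto_iff_dist_tendsto_zero]
    simp only [hdist]
    simpa using (tendsto_pow_atTop_nhds_zero_of_lt_one (le_of_lt (hlam k).1)
      (hlam k).2).mul_const (dist x (p k))
  exact hc.isClosed.mem_of_tendsto htend (Filter.Eventually.of_forall hmem)

lemma aux_word_mem {n : ℕ} (Tθ : Fin n → ℂ → ℂ) (F : Set ℂ)
    (hinv : ∀ j : Fin n, Tθ j '' F ⊆ F) (a : List (Fin n)) (q : ℂ) (hq : q ∈ F) :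
    wordMap Tθ a q ∈ F := by
  induction a with
  | nil => simpa [wordMap]
  | cons k a ih => exact hinv k ⟨_, ih, rfl⟩

/-- Continuity in Angular Parameters: with fixed points and moduli fixed,
the attractor depends continuously on the vector of rotation angles, in the metric
`d_∞(F,F') = sup_a |T_a(p) − T_a'(p)|` over all finite addresses `a`, restricted to
angle vectors whose attractor has diameter below a fixed bound `D > diam F[θ]`. -/
theorem continuity_in_angular_parameters {n : ℕ} (hn : 1 ≤ n)
    (p : Fin n → ℂ) (lam : Fin n → ℝ) (hlam : ∀ k, 0 < lam k ∧ lam k < 1)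
    (T : (Fin n → ℝ) → Fin n → ℂ → ℂ)
    (hT : ∀ θ k z, T θ k z =
      p k + (lam k : ℂ) * Complex.exp ((θ k : ℂ) * Complex.I) * (z - p k))
    (Fat : (Fin n → ℝ) → Set ℂ)
    (hFat : ∀ θ : Fin n → ℝ,
      (Fat θ).Nonempty ∧ IsCompact (Fat θ) ∧ Fat θ = ⋃ k, T θ k '' Fat θ)
    (k₀ : Fin n) (θ : Fin n → ℝ) (hθ : ∀ k, θ k ∈ Set.Ioc (-Real.pi) Real.pi)
    (D : ℝ) (hD : Metric.diam (Fat θ) < D) :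
    ∀ ε > 0, ∃ δ > 0, ∀ θ' : Fin n → ℝ,
      (∀ k, θ' k ∈ Set.Ioc (-Real.pi) Real.pi) →
      Metric.diam (Fat θ') < D →
      (∀ k, |θ k - θ' k| < δ) →
      (⨆ a : List (Fin n),
        dist (wordMap (T θ) a (p k₀)) (wordMap (T θ') a (p k₀))) < ε := by
  intro ε hε
  have hnem : Nonempty (Fin n) := ⟨⟨0, hn⟩⟩
  have hune : (Finset.univ : Finset (Fin n)).Nonempty := Finset.univ_nonempty
  set Λ : ℝ := Finset.univ.sup' hune lam with hΛdef
  have hΛle : ∀ k, lam k ≤ Λ := fun k => Finset.le_sup' lam (Finset.mem_univ k)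
  have hΛpos : 0 < Λ := lt_of_lt_of_le (hlam k₀).1 (hΛle k₀)
  have hΛlt : Λ < 1 := by
    rw [hΛdef, Finset.sup'_lt_iff]
    exact fun k _ => (hlam k).2
  have hD0 : 0 < D := lt_of_le_of_lt Metric.diam_nonneg hD
  have h1Λ : 0 < 1 - Λ := by linarith
  refine ⟨(1 - Λ) * ε / (2 * D), by positivity, ?_⟩
  intro θ' hθ' hD' hclose
  set δ : ℝ := (1 - Λ) * ε / (2 * D) with hδdef
  have hδpos : 0 < δ := by rw [hδdef]; positivity
  have hδD : δ * D = (1 - Λ) * ε / 2 := by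
    rw [hδdef]; field_simp
  -- fixed points and word images lie in Fat θ'
  obtain ⟨hne', hc', hinv'⟩ := hFat θ'
  have hsub' : ∀ j : Fin n, T θ' j '' Fat θ' ⊆ Fat θ' := by
    intro j
    conv_rhs => rw [hinv']
    exact Set.subset_iUnion (fun j => T θ' j '' Fat θ') j
  have hpmem : ∀ k, p k ∈ Fat θ' :=
    aux_fixed_mem p lam hlam (T θ') θ' (hT θ') (Fat θ') hne' hc' hinv'
  have hbound' : ∀ x y : ℂ, x ∈ Fat θ' → y ∈ Fat θ' → dist x y ≤ D := by
    intro x y hx hy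
    exact le_of_lt (lt_of_le_of_lt (Metric.dist_le_diam_of_mem hc'.isBounded hx hy) hD')
  -- the key estimate, by induction on the word
  have key : ∀ a : List (Fin n),
      dist (wordMap (T θ) a (p k₀)) (wordMap (T θ') a (p k₀)) ≤ ε / 2 := by
    intro a
    induction a with
    | nil => simp [wordMap]; positivity
    | cons k a ih =>
      set x := wordMap (T θ) a (p k₀)
      set y := wordMap (T θ') a (p k₀)
      have hy : y ∈ Fat θ' := aux_word_mem (T θ') (Fat θ') hsub' a (p k₀) (hpmem k₀)
      have step : wordMap (T θ) (k :: a) (p k₀) = T θ k x := rfl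
      have step' : wordMap (T θ') (k :: a) (p k₀) = T θ' k y := rfl
      rw [step, step']
      have h1 : dist (T θ k x) (T θ k y) = lam k * dist x y := by
        rw [Complex.dist_eq, hT, hT]
        have he : p k + (lam k : ℂ) * Complex.exp ((θ k : ℂ) * Complex.I) * (x - p k)
            - (p k + (lam k : ℂ) * Complex.exp ((θ k : ℂ) * Complex.I) * (y - p k))
            = (lam k : ℂ) * Complex.exp ((θ k : ℂ) * Complex.I) * (x - y) := by ring
        rw [he, norm_mul, norm_mul, Complex.dist_eq]
        simp [Complex.norm_exp, abs_of_pos (hlam k).1]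
      have h2 : dist (T θ k y) (T θ' k y) ≤ lam k * (δ * D) := by
        rw [Complex.dist_eq, hT, hT]
        have he : p k + (lam k : ℂ) * Complex.exp ((θ k : ℂ) * Complex.I) * (y - p k)
            - (p k + (lam k : ℂ) * Complex.exp ((θ' k : ℂ) * Complex.I) * (y - p k))
            = (lam k : ℂ) * ((Complex.exp ((θ k : ℂ) * Complex.I)
              - Complex.exp ((θ' k : ℂ) * Complex.I)) * (y - p k)) := by ring
        rw [he, norm_mul, norm_mul]
        have hyp : ‖y - p k‖ ≤ D := by
          rw [← Complex.dist_eq]; exact hbound' y (p k) hy (hpmem k)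
        have hexp : ‖Complex.exp ((θ k : ℂ) * Complex.I)
            - Complex.exp ((θ' k : ℂ) * Complex.I)‖ ≤ δ := by
          refine le_trans (expI_dist_le (θ k) (θ' k)) (le_of_lt (hclose k))
        have h0 : ‖((lam k : ℝ) : ℂ)‖ = lam k := by
          simp [abs_of_pos (hlam k).1]
        rw [h0]
        have := mul_le_mul hexp hyp (norm_nonneg _) (le_of_lt hδpos)
        · exact mul_le_mul_of_nonneg_left this (le_of_lt (hlam k).1)
      calc dist (T θ k x) (T θ' k y)
          ≤ dist (T θ k x) (T θ k y) + dist (T θ k y) (T θ' k y) := dist_triangle _ _ _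
        _ ≤ lam k * dist x y + lam k * (δ * D) := by rw [h1]; linarith
        _ ≤ Λ * (ε / 2) + Λ * (δ * D) := by
            have hd0 : 0 ≤ dist x y := dist_nonneg
            have := hΛle k
            have h3 : lam k * dist x y ≤ Λ * (ε / 2) := by
              calc lam k * dist x y ≤ Λ * dist x y :=
                    mul_le_mul_of_nonneg_right this hd0
                _ ≤ Λ * (ε / 2) := mul_le_mul_of_nonneg_left ih (le_of_lt hΛpos)
            have h4 : lam k * (δ * D) ≤ Λ * (δ * D) := by
              have : 0 ≤ δ * D := mul_nonneg (le_of_lt hδpos) (le_of_lt hD0)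
              exact mul_le_mul_of_nonneg_right (hΛle k) this
            linarith
        _ ≤ ε / 2 := by rw [hδD]; nlinarith [mul_nonneg hε.le (sq_nonneg (1 - Λ))]
  have hsup : (⨆ a : List (Fin n),
      dist (wordMap (T θ) a (p k₀)) (wordMap (T θ') a (p k₀))) ≤ ε / 2 :=
    ciSup_le key
  linarith
end
end

section
/- Assume the IFS is a fractal of unity with angles θ_k = 2πN_k/M and the fixed points p_1,…,p_n are not all equal; set V := M / gcd(N_1,…,N_n,M). (i) If x is a nonempty focal word such that p_x is an extremal point of F and the pair (∅,x) ∈ Frm(p_x) is irreducible, then |x| ≤ V. (ii) If e is an extremal point of F and (b,x) ∈ Frm(e) is irreducible, then |b| + |x| ≤ 2V. -/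
open Complex

noncomputable section

namespace IFSAux

variable {n : ℕ} {p φ : Fin n → ℂ} {T : Fin n → ℂ → ℂ}

lemma wordFactor_nil : wordFactor φ ([] : List (Fin n)) = 1 := by simp [wordFactor]

lemma wordFactor_cons (k : Fin n) (a : List (Fin n)) :
    wordFactor φ (k :: a) = φ k * wordFactor φ a := by simp [wordFactor]

lemma wordMap_append (T : Fin n → ℂ → ℂ) (a b : List (Fin n)) (z : ℂ) :
    wordMap T (a ++ b) z = wordMap T a (wordMap T b z) := by
  induction a with
  | nil => rfl
  | cons k a ih => simp [wordMap, ih]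

lemma wordMap_sub (hT : ∀ k z, T k z = p k + φ k * (z - p k)) (a : List (Fin n)) (z z' : ℂ) :
    wordMap T a z - wordMap T a z' = wordFactor φ a * (z - z') := by
  induction a with
  | nil => simp [wordMap, wordFactor_nil]
  | cons k a ih =>
    simp only [wordMap, Function.comp_apply, hT, wordFactor_cons]
    rw [show p k + φ k * (wordMap T a z - p k) - (p k + φ k * (wordMap T a z' - p k))
        = φ k * (wordMap T a z - wordMap T a z') by ring, ih]
    ring

lemma abs_wordFactor_pos (hφ : ∀ k, 0 < ‖φ k‖ ∧ ‖φ k‖ < 1)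
    (a : List (Fin n)) : 0 < ‖wordFactor φ a‖ := by
  induction a with
  | nil => simp [wordFactor_nil]
  | cons k a ih => rw [wordFactor_cons, norm_mul]; exact mul_pos (hφ k).1 ih

lemma abs_wordFactor_le_one (hφ : ∀ k, 0 < ‖φ k‖ ∧ ‖φ k‖ < 1)
    (a : List (Fin n)) : ‖wordFactor φ a‖ ≤ 1 := by
  induction a with
  | nil => simp [wordFactor_nil]
  | cons k a ih =>
    rw [wordFactor_cons, norm_mul]
    exact mul_le_one₀ (hφ k).2.le (norm_nonneg _) ih

lemma abs_wordFactor_lt_one (hφ : ∀ k, 0 < ‖φ k‖ ∧ ‖φ k‖ < 1)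
    {a : List (Fin n)} (ha : a ≠ []) : ‖wordFactor φ a‖ < 1 := by
  cases a with
  | nil => exact absurd rfl ha
  | cons k a =>
    rw [wordFactor_cons, norm_mul]
    calc ‖φ k‖ * ‖wordFactor φ a‖
        ≤ ‖φ k‖ * 1 :=
          mul_le_mul_of_nonneg_left (abs_wordFactor_le_one hφ a) (norm_nonneg _)
      _ = ‖φ k‖ := mul_one _
      _ < 1 := (hφ k).2

lemma wordFactor_ne_zero (hφ : ∀ k, 0 < ‖φ k‖ ∧ ‖φ k‖ < 1)
    (a : List (Fin n)) : wordFactor φ a ≠ 0 := by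
  intro h
  have := abs_wordFactor_pos hφ a
  rw [h] at this; simp at this

lemma wordMap_affine (hT : ∀ k z, T k z = p k + φ k * (z - p k)) (a : List (Fin n))
    (s₁ s₂ : ℂ) (t : ℝ) :
    wordMap T a (t • s₁ + (1 - t) • s₂)
      = t • wordMap T a s₁ + (1 - t) • wordMap T a s₂ := by
  have h1 := wordMap_sub hT a (t • s₁ + (1 - t) • s₂) 0
  have h2 := wordMap_sub hT a s₁ 0
  have h3 := wordMap_sub hT a s₂ 0
  simp only [sub_zero] at h1 h2 h3
  have e1 : wordMap T a (t • s₁ + (1 - t) • s₂)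
      = wordFactor φ a * (t • s₁ + (1 - t) • s₂) + wordMap T a 0 := by
    rw [← h1]; ring
  have e2 : wordMap T a s₁ = wordFactor φ a * s₁ + wordMap T a 0 := by rw [← h2]; ring
  have e3 : wordMap T a s₂ = wordFactor φ a * s₂ + wordMap T a 0 := by rw [← h3]; ring
  rw [e1, e2, e3]
  simp only [Complex.real_smul]
  push_cast
  ring

lemma wordMap_mem {F : Set ℂ} (hFinv : ∀ k, T k '' F ⊆ F) (a : List (Fin n)) {z : ℂ}
    (hz : z ∈ F) : wordMap T a z ∈ F := by
  induction a with
  | nil => exact hz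
  | cons k a ih => exact hFinv k ⟨wordMap T a z, ih, rfl⟩

lemma fixed_mem {F : Set ℂ} (hφ : ∀ k, 0 < ‖φ k‖ ∧ ‖φ k‖ < 1)
    (hT : ∀ k z, T k z = p k + φ k * (z - p k))
    (hFne : F.Nonempty) (hFc : IsCompact F) (hFinv : ∀ k, T k '' F ⊆ F)
    {a : List (Fin n)} (ha : a ≠ []) {q : ℂ} (hq : wordMap T a q = q) : q ∈ F := by
  obtain ⟨f, hf⟩ := hFne
  set g := wordMap T a with hg
  set r := ‖wordFactor φ a‖ with hr
  have hr1 : r < 1 := abs_wordFactor_lt_one hφ ha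
  have hr0 : 0 ≤ r := norm_nonneg _
  have hdist : ∀ m : ℕ, dist (g^[m] f) q = r ^ m * dist f q := by
    intro m
    induction m with
    | zero => simp
    | succ m ih =>
      rw [Function.iterate_succ_apply']
      have : dist (g (g^[m] f)) q = r * dist (g^[m] f) q := by
        rw [Complex.dist_eq, Complex.dist_eq]
        have := wordMap_sub hT a (g^[m] f) q
        rw [← hg, hq] at this
        rw [this, norm_mul]
      rw [this, ih]; ring
  have hmem : ∀ m : ℕ, g^[m] f ∈ F := by
    intro m
    induction m with
    | zero => exact hf
    | succ m ih =>
      rw [Function.iterate_succ_apply']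
      exact wordMap_mem hFinv a ih
  have htend : Filter.Tendsto (fun m => g^[m] f) Filter.atTop (nhds q) := by
    rw [tendsto_iff_dist_tendsto_zero]
    simp only [hdist]
    have := (tendsto_pow_atTop_nhds_zero_of_lt_one hr0 hr1).mul_const (dist f q)
    simpa using this
  exact hFc.isClosed.mem_of_tendsto htend (Filter.Eventually.of_forall hmem)

lemma fixed_unique (hφ : ∀ k, 0 < ‖φ k‖ ∧ ‖φ k‖ < 1)
    (hT : ∀ k z, T k z = p k + φ k * (z - p k))
    {a : List (Fin n)} (ha : a ≠ []) {q q' : ℂ}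
    (hq : wordMap T a q = q) (hq' : wordMap T a q' = q') : q = q' := by
  have h := wordMap_sub hT a q q'
  rw [hq, hq'] at h
  by_contra hne
  have hsub : q - q' ≠ 0 := sub_ne_zero.mpr hne
  have : ‖q - q'‖ = ‖wordFactor φ a‖ * ‖q - q'‖ := by
    rw [← norm_mul, ← h]
  have hlt : ‖wordFactor φ a‖ * ‖q - q'‖ < ‖q - q'‖ := by
    have := abs_wordFactor_lt_one hφ ha
    have hpos : 0 < ‖q - q'‖ := by
      simpa [norm_pos_iff] using hsub
    nlinarith
  rw [← this] at hlt
  exact lt_irrefl _ hlt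

lemma wordFactor_polar {M : ℕ} (hM : 1 ≤ M) {N : Fin n → ℕ}
    (hunity : ∀ k, φ k = (‖φ k‖ : ℂ) *
      Complex.exp ((((2 * Real.pi * (N k : ℝ)) / (M : ℝ) : ℝ) : ℂ) * Complex.I))
    (a : List (Fin n)) :
    wordFactor φ a = (((a.map fun k => ‖φ k‖).prod : ℝ) : ℂ) *
      Complex.exp ((((2 * Real.pi * (((a.map N).sum : ℕ) : ℝ)) / (M : ℝ) : ℝ) : ℂ)
        * Complex.I) := by
  induction a with
  | nil => simp [wordFactor_nil]
  | cons k a ih =>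
    rw [wordFactor_cons, ih, hunity k]
    rw [show ∀ A B C D : ℂ, (A * B) * (C * D) = (A * C) * (B * D) by intros; ring]
    congr 1
    · push_cast [List.map_cons, List.prod_cons]; ring
    · rw [← Complex.exp_add]
      congr 1
      rw [← add_mul]
      congr 1
      push_cast [List.map_cons, List.sum_cons]
      have hM0 : (M : ℂ) ≠ 0 := by
        exact_mod_cast Nat.cast_ne_zero.mpr (by omega)
      field_simp

lemma focal_of_dvd {M : ℕ} (hM : 1 ≤ M) {N : Fin n → ℕ}
    (hφ : ∀ k, 0 < ‖φ k‖ ∧ ‖φ k‖ < 1)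
    (hunity : ∀ k, φ k = (‖φ k‖ : ℂ) *
      Complex.exp ((((2 * Real.pi * (N k : ℝ)) / (M : ℝ) : ℝ) : ℂ) * Complex.I))
    (a : List (Fin n)) (hdvd : M ∣ (a.map N).sum) :
    ∃ r : ℝ, 0 < r ∧ wordFactor φ a = (r : ℂ) := by
  obtain ⟨m, hm⟩ := hdvd
  refine ⟨(a.map fun k => ‖φ k‖).prod, ?_, ?_⟩
  · apply List.prod_pos
    intro x hx
    obtain ⟨k, _, rfl⟩ := List.mem_map.mp hx
    exact (hφ k).1
  · rw [wordFactor_polar hM hunity a, hm]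
    have hMr : (M : ℝ) ≠ 0 := by exact_mod_cast Nat.cast_ne_zero.mpr (by omega)
    have harg : (((2 * Real.pi * (((M * m : ℕ)) : ℝ)) / (M : ℝ) : ℝ) : ℂ) * Complex.I
        = (m : ℤ) * (2 * Real.pi * Complex.I) := by
      have : ((2 * Real.pi * (((M * m : ℕ)) : ℝ)) / (M : ℝ) : ℝ) = (m : ℝ) * (2 * Real.pi) := by
        push_cast
        field_simp
      rw [this]
      push_cast
      ring
    rw [harg, Complex.exp_int_mul_two_pi_mul_I]
    ring

lemma core_extremal {F : Set ℂ}
    (hφ : ∀ k, 0 < ‖φ k‖ ∧ ‖φ k‖ < 1)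
    (hT : ∀ k z, T k z = p k + φ k * (z - p k))
    (hFne : F.Nonempty) (hFc : IsCompact F) (hFinv : ∀ k, T k '' F ⊆ F)
    {e : ℂ} (hE : IsExtremal F e) (u : List (Fin n)) {w : List (Fin n)} (hw : w ≠ [])
    {r : ℝ} (hr : 0 < r) (hwf : wordFactor φ w = (r : ℂ)) {pw : ℂ}
    (hpw : wordMap T w pw = pw) {z : ℂ} (hz : z ∈ F)
    (he : e = wordMap T u (wordMap T w z)) : z = pw := by
  by_contra hne
  have hr1 : r < 1 := by
    have h := abs_wordFactor_lt_one hφ hw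
    rw [hwf, Complex.norm_real, Real.norm_eq_abs, abs_of_pos hr] at h
    exact h
  have hpwF : pw ∈ F := fixed_mem hφ hT hFne hFc hFinv hw hpw
  have hkey : wordMap T w z = r • z + (1 - r) • pw := by
    have h := wordMap_sub hT w z pw
    rw [hpw, hwf] at h
    have h2 : wordMap T w z = (r : ℂ) * (z - pw) + pw := by
      rw [← h]; ring
    rw [h2]
    simp only [Complex.real_smul]
    push_cast
    ring
  have he2 : e = r • wordMap T u z + (1 - r) • wordMap T u pw := by
    rw [he, hkey, wordMap_affine hT]
  apply hE.2
  refine ⟨wordMap T u z, wordMap T u pw, wordMap_mem hFinv u hz, wordMap_mem hFinv u hpwF,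
    ?_, r, hr, hr1, he2⟩
  intro hcontra
  have h := wordMap_sub hT u z pw
  rw [hcontra, sub_self] at h
  have := mul_eq_zero.mp h.symm
  rcases this with h' | h'
  · exact wordFactor_ne_zero hφ u h'
  · exact hne (sub_eq_zero.mp h')

lemma pigeon {M : ℕ} (hM : 1 ≤ M) (N : Fin n → ℕ) (a : List (Fin n)) (L : ℕ)
    (hL : M / Nat.gcd (Finset.univ.gcd N) M < L) :
    ∃ i j : ℕ, i < j ∧ j < L ∧ M ∣ (((a.take j).drop i).map N).sum := by
  set g := Finset.univ.gcd N with hg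
  set d := Nat.gcd g M with hd
  have hdM : d ∣ M := Nat.gcd_dvd_right g M
  have hdpos : 0 < d := Nat.gcd_pos_of_pos_right g (by omega)
  set V := M / d with hVdef
  have hdV : d * V = M := Nat.mul_div_cancel' hdM
  have hVpos : 0 < V := Nat.div_pos (Nat.le_of_dvd (by omega) hdM) hdpos
  haveI : NeZero V := ⟨by omega⟩
  set S := fun j : ℕ => ((a.take j).map N).sum with hS
  have hdS : ∀ j, d ∣ S j := by
    intro j
    apply List.dvd_sum
    intro x hx
    obtain ⟨k, _, rfl⟩ := List.mem_map.mp hx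
    exact dvd_trans (Nat.gcd_dvd_left g M) (Finset.gcd_dvd (Finset.mem_univ k))
  have hsplit : ∀ i j : ℕ, i < j → S j = S i + (((a.take j).drop i).map N).sum := by
    intro i j hij
    have htk : a.take j = a.take i ++ (a.take j).drop i := by
      conv_lhs => rw [← List.take_append_drop i (a.take j)]
      rw [List.take_take, min_eq_left hij.le]
    calc S j = ((a.take i ++ (a.take j).drop i).map N).sum := by rw [← htk]
      _ = S i + (((a.take j).drop i).map N).sum := by
          rw [List.map_append, List.sum_append]
  have key : ∀ i j : ℕ, i < j → ((S i / d : ℕ) : ZMod V) = ((S j / d : ℕ) : ZMod V) →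
      M ∣ (((a.take j).drop i).map N).sum := by
    intro i j hij heq
    have hle : S i ≤ S j := by
      have := hsplit i j hij; omega
    have hle' : S i / d ≤ S j / d := Nat.div_le_div_right hle
    have hmod : (S i / d) ≡ (S j / d) [MOD V] := (ZMod.natCast_eq_natCast_iff _ _ _).mp heq
    obtain ⟨t, ht⟩ := (Nat.modEq_iff_dvd' hle').mp hmod
    have hA : d * (S i / d) = S i := Nat.mul_div_cancel' (hdS i)
    have hB : d * (S j / d) = S j := Nat.mul_div_cancel' (hdS j)
    have hBA : S j / d = S i / d + V * t := by omega
    have hSj : S j = S i + M * t := by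
      have : d * (S j / d) = d * (S i / d) + d * (V * t) := by rw [hBA]; ring
      rw [hA, hB] at this
      rw [this, ← mul_assoc, hdV]
    refine ⟨t, ?_⟩
    have := hsplit i j hij
    omega
  have hcard : Fintype.card (ZMod V) < Fintype.card (Fin L) := by
    rw [ZMod.card, Fintype.card_fin]
    exact hL
  obtain ⟨i, j, hij, hfeq⟩ :=
    Fintype.exists_ne_map_eq_of_card_lt (fun j : Fin L => ((S j / d : ℕ) : ZMod V)) hcard
  have hvne : (i : ℕ) ≠ (j : ℕ) := fun h => hij (Fin.val_injective h)
  rcases Nat.lt_or_ge (i : ℕ) (j : ℕ) with h | h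
  · exact ⟨i, j, h, j.isLt, key i j h hfeq⟩
  · have h' : (j : ℕ) < (i : ℕ) := by omega
    exact ⟨j, i, h', i.isLt, key j i h' hfeq.symm⟩

lemma shorten {F : Set ℂ} {M : ℕ} (hM : 1 ≤ M) {N : Fin n → ℕ}
    (hφ : ∀ k, 0 < ‖φ k‖ ∧ ‖φ k‖ < 1)
    (hT : ∀ k z, T k z = p k + φ k * (z - p k))
    (hFne : F.Nonempty) (hFc : IsCompact F) (hFinv : ∀ k, T k '' F ⊆ F)
    (hunity : ∀ k, φ k = (‖φ k‖ : ℂ) *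
      Complex.exp ((((2 * Real.pi * (N k : ℝ)) / (M : ℝ) : ℝ) : ℂ) * Complex.I))
    (pp : List (Fin n) → ℂ) (hpp : ∀ x, x ≠ [] → wordMap T x (pp x) = pp x)
    {e : ℂ} (hE : IsExtremal F e) (c a : List (Fin n)) {z0 : ℂ} (hz0 : z0 ∈ F)
    (he : e = wordMap T c (wordMap T a z0)) (L : ℕ) (hLa : L ≤ a.length + 1)
    (hL : M / Nat.gcd (Finset.univ.gcd N) M < L) :
    ∃ (cy y : List (Fin n)) (j : ℕ), y ≠ [] ∧ (∃ r : ℝ, 0 < r ∧ wordFactor φ y = (r : ℂ)) ∧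
      e = wordMap T cy (pp y) ∧ cy.length + y.length = c.length + j ∧ j < L := by
  obtain ⟨i, j, hij, hjL, hdvd⟩ := pigeon hM N a L hL
  have hja : j ≤ a.length := by omega
  set u := a.take i with hu
  set w := (a.take j).drop i with hwdef
  set v := a.drop j with hv
  have huw : u ++ w = a.take j := by
    rw [hu, hwdef]
    conv_rhs => rw [← List.take_append_drop i (a.take j)]
    rw [List.take_take, min_eq_left hij.le]
  have hsplit : a = (u ++ w) ++ v := by rw [huw, hv, List.take_append_drop]
  have hwlen : w.length = j - i := by
    rw [hwdef]
    simp [List.length_drop, List.length_take, min_eq_left hja]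
  have hulen : u.length = i := by
    rw [hu, List.length_take]
    omega
  have hwne : w ≠ [] := by
    intro h
    rw [h] at hwlen
    simp at hwlen
    omega
  obtain ⟨r, hr, hwf⟩ := focal_of_dvd hM hφ hunity w hdvd
  have hppw := hpp w hwne
  set q := wordMap T v z0 with hq
  have hqF : q ∈ F := wordMap_mem hFinv v hz0
  have haz : wordMap T a z0 = wordMap T u (wordMap T w q) := by
    rw [hq]
    conv_lhs => rw [hsplit]
    rw [wordMap_append, wordMap_append]
  have he2 : e = wordMap T (c ++ u) (wordMap T w q) := by
    rw [he, haz, wordMap_append]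
  have hqpw : q = pp w :=
    core_extremal hφ hT hFne hFc hFinv hE (c ++ u) hwne hr hwf hppw hqF he2
  refine ⟨c ++ u, w, j, hwne, ⟨r, hr, hwf⟩, ?_, ?_, hjL⟩
  · rw [he2, hqpw, hppw]
  · rw [List.length_append, hulen, hwlen]
    omega

end IFSAux

open IFSAux

/-- in a fractal of unity with angles `θ_k = 2πN_k/M`, not all fixed points
equal, and `V := M / gcd(N₁,…,Nₙ,M)`: (i) a focal extremal point `p_x` whose form `(∅,x)`
is irreducible has `|x| ≤ V`; (ii) an extremal point `e` with irreducible form `(b,x)`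
has `|b| + |x| ≤ 2V`. -/
theorem irreducible_form_length_bounds {n : ℕ} (hn : 1 ≤ n) (p φ : Fin n → ℂ)
    (hφ : ∀ k, 0 < ‖φ k‖ ∧ ‖φ k‖ < 1)
    (T : Fin n → ℂ → ℂ) (hT : ∀ k z, T k z = p k + φ k * (z - p k))
    (F : Set ℂ) (hFne : F.Nonempty) (hFc : IsCompact F)
    (hFinv : F = ⋃ k, T k '' F)
    (hne : ∃ i j, p i ≠ p j)
    (M : ℕ) (hM : 1 ≤ M) (N : Fin n → ℕ) (hN : ∀ k, N k < M)
    (hunity : ∀ k, φ k = (‖φ k‖ : ℂ) *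
      Complex.exp ((((2 * Real.pi * (N k : ℝ)) / (M : ℝ) : ℝ) : ℂ) * Complex.I))
    (pp : List (Fin n) → ℂ) (hpp : ∀ x, x ≠ [] → wordMap T x (pp x) = pp x) :
    (∀ x : List (Fin n), x ≠ [] →
      (∃ r : ℝ, 0 < r ∧ wordFactor φ x = (r : ℂ)) →
      IsExtremal F (pp x) →
      (¬ ∃ (c y : List (Fin n)), y ≠ [] ∧
        (∃ r : ℝ, 0 < r ∧ wordFactor φ y = (r : ℂ)) ∧
        pp x = wordMap T c (pp y) ∧ c.length + y.length < x.length) →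
      x.length ≤ M / Nat.gcd (Finset.univ.gcd N) M) ∧
    (∀ (e : ℂ) (b x : List (Fin n)), IsExtremal F e → x ≠ [] →
      (∃ r : ℝ, 0 < r ∧ wordFactor φ x = (r : ℂ)) →
      e = wordMap T b (pp x) →
      (¬ ∃ (c y : List (Fin n)), y ≠ [] ∧
        (∃ r : ℝ, 0 < r ∧ wordFactor φ y = (r : ℂ)) ∧
        e = wordMap T c (pp y) ∧ c.length + y.length < b.length + x.length) →
      b.length + x.length ≤ 2 * (M / Nat.gcd (Finset.univ.gcd N) M)) := by
  have hFinv' : ∀ k, T k '' F ⊆ F := by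
    intro k
    have h : (⋃ k, T k '' F) ⊆ F := le_of_eq hFinv.symm
    exact (Set.subset_iUnion (fun k => T k '' F) k).trans h
  constructor
  · intro x hx hfoc hE hirr
    by_contra hlen
    push_neg at hlen
    have hppxF : pp x ∈ F := fixed_mem hφ hT hFne hFc hFinv' hx (hpp x hx)
    have he : pp x = wordMap T [] (wordMap T x (pp x)) := by
      rw [hpp x hx]; rfl
    obtain ⟨cy, y, j, hyne, hyfoc, hform, hlency, hjlt⟩ :=
      shorten hM hφ hT hFne hFc hFinv' hunity pp hpp hE [] x hppxF he x.length
        (by omega) hlen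
    exact hirr ⟨cy, y, hyne, hyfoc, hform, by simp at hlency; omega⟩
  · intro e b x hE hx hfoc heq hirr
    have hppxF : pp x ∈ F := fixed_mem hφ hT hFne hFc hFinv' hx (hpp x hx)
    have hxpos : 0 < x.length := List.length_pos_iff.mpr hx
    have hxlen : x.length ≤ M / Nat.gcd (Finset.univ.gcd N) M := by
      by_contra h
      push_neg at h
      have he : e = wordMap T b (wordMap T x (pp x)) := by rw [hpp x hx]; exact heq
      obtain ⟨cy, y, j, hyne, hyfoc, hform, hlency, hjlt⟩ :=
        shorten hM hφ hT hFne hFc hFinv' hunity pp hpp hE b x hppxF he x.length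
          (by omega) h
      exact hirr ⟨cy, y, hyne, hyfoc, hform, by omega⟩
    have hblen : b.length ≤ M / Nat.gcd (Finset.univ.gcd N) M := by
      by_contra h
      push_neg at h
      have he : e = wordMap T [] (wordMap T b (pp x)) := by
        simpa [wordMap] using heq
      obtain ⟨cy, y, j, hyne, hyfoc, hform, hlency, hjlt⟩ :=
        shorten hM hφ hT hFne hFc hFinv' hunity pp hpp hE [] b hppxF he (b.length + 1)
          (by omega) (by omega)
      exact hirr ⟨cy, y, hyne, hyfoc, hform, by simp at hlency; omega⟩
    omega
end
end

section
/- Normal-form composition formula for bifractals: let T_1(z) = φ_1·z and T_2(z) = 1 + φ_2·(z − 1) with φ_1, φ_2 ∈ ℂ. For every L ∈ ℕ ∪ {0}, all nonnegative integers n_0, n_1, …, n_L, and every z ∈ ℂ, writing s_j := n_0 + n_1 + ⋯ + n_j, one has T_1^{n_0} T_2 T_1^{n_1} T_2 ⋯ T_1^{n_L} T_2 (z) = (1 − φ_2)·Σ_{j=0}^{L} φ_1^{s_j} φ_2^{j} + φ_1^{s_L} φ_2^{L+1}·z; in particular T_1^{n_0} T_2 T_1^{n_1} T_2 ⋯ T_1^{n_L}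 T_2 (0) = (1 − φ_2)·Σ_{j=0}^{L} φ_1^{s_j} φ_2^{j}. -/
noncomputable section

/-- The alternating composition `T₁^{m₀} ∘ T₂ ∘ T₁^{m₁} ∘ T₂ ∘ ⋯ ∘ T₁^{m_L} ∘ T₂`
encoded by the list `[m₀, m₁, …, m_L]` of exponents. -/
def chain (T₁ T₂ : ℂ → ℂ) : List ℕ → ℂ → ℂ
  | [] => id
  | m :: ms => (T₁^[m]) ∘ T₂ ∘ chain T₁ T₂ ms

/-- normal-form composition formula for bifractals: with `T₁(z) = φ₁z` and
`T₂(z) = 1 + φ₂(z − 1)`, for every `L`, all exponents `n₀, …, n_L ∈ ℕ`, and every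
`z ∈ ℂ`, writing `s_j = n₀ + ⋯ + n_j`, one has
`T₁^{n₀}T₂T₁^{n₁}T₂⋯T₁^{n_L}T₂(z) = (1 − φ₂)·∑_{j=0}^{L} φ₁^{s_j}φ₂^j + φ₁^{s_L}φ₂^{L+1}z`;
in particular the value at `z = 0` is `(1 − φ₂)·∑_{j=0}^{L} φ₁^{s_j}φ₂^j`. -/
theorem bifractal_normal_form_composition (φ₁ φ₂ : ℂ) (T₁ T₂ : ℂ → ℂ)
    (hT₁ : ∀ z, T₁ z = φ₁ * z) (hT₂ : ∀ z, T₂ z = 1 + φ₂ * (z - 1))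
    (L : ℕ) (nn : ℕ → ℕ) (z : ℂ) :
    chain T₁ T₂ (List.ofFn fun j : Fin (L + 1) => nn j) z =
      (1 - φ₂) * ∑ j ∈ Finset.range (L + 1),
          φ₁ ^ (∑ k ∈ Finset.range (j + 1), nn k) * φ₂ ^ j +
        φ₁ ^ (∑ k ∈ Finset.range (L + 1), nn k) * φ₂ ^ (L + 1) * z ∧
    chain T₁ T₂ (List.ofFn fun j : Fin (L + 1) => nn j) 0 =
      (1 - φ₂) * ∑ j ∈ Finset.range (L + 1),
          φ₁ ^ (∑ k ∈ Finset.range (j + 1), nn k) * φ₂ ^ j := by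

  have hiter : ∀ (m : ℕ) (w : ℂ), T₁^[m] w = φ₁ ^ m * w := by
    intro m
    induction m with
    | zero => intro w; simp
    | succ m ih =>
      intro w
      rw [Function.iterate_succ_apply, hT₁, ih, pow_succ]
      ring
  have key : ∀ (L : ℕ) (nn : ℕ → ℕ) (z : ℂ),
      chain T₁ T₂ (List.ofFn fun j : Fin (L + 1) => nn j) z =
        (1 - φ₂) * ∑ j ∈ Finset.range (L + 1),
            φ₁ ^ (∑ k ∈ Finset.range (j + 1), nn k) * φ₂ ^ j +
          φ₁ ^ (∑ k ∈ Finset.range (L + 1), nn k) * φ₂ ^ (L + 1) * z := by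
    intro L
    induction L with
    | zero =>
      intro nn z
      simp only [List.ofFn_succ, List.ofFn_zero, chain, Function.comp_apply, id_eq,
        Fin.val_zero, hT₂, hiter]
      rw [Finset.sum_range_succ, Finset.sum_range_zero, Finset.sum_range_succ,
        Finset.sum_range_zero]
      simp only [Nat.zero_add, zero_add]
      ring
    | succ L ih =>
      intro nn z
      have htail : (List.ofFn fun i : Fin (L + 1) => nn (i.succ : Fin (L + 2))) =
          List.ofFn fun i : Fin (L + 1) => (fun k => nn (k + 1)) (i : ℕ) := by
        rfl
      rw [List.ofFn_succ]
      show T₁^[nn (0 : Fin (L + 2))] (T₂ (chain T₁ T₂ _ z)) = _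
      rw [htail, ih (fun k => nn (k + 1)) z, hT₂, hiter]
      have hs : ∀ j : ℕ, (∑ k ∈ Finset.range (j + 1 + 1), nn k) =
          nn 0 + ∑ k ∈ Finset.range (j + 1), nn (k + 1) := by
        intro j
        rw [Finset.sum_range_succ' (fun k => nn k) (j + 1)]
        ring
      have hsum : (∑ j ∈ Finset.range (L + 1 + 1),
            φ₁ ^ (∑ k ∈ Finset.range (j + 1), nn k) * φ₂ ^ j) =
          φ₁ ^ nn 0 + φ₂ * φ₁ ^ nn 0 *
            ∑ j ∈ Finset.range (L + 1),
              φ₁ ^ (∑ k ∈ Finset.range (j + 1), nn (k + 1)) * φ₂ ^ j := by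
        rw [Finset.sum_range_succ' (fun j => φ₁ ^ (∑ k ∈ Finset.range (j + 1), nn k) * φ₂ ^ j) (L + 1),
          add_comm]
        simp only [hs, pow_add, Finset.sum_range_one, pow_zero, mul_one, pow_one]
        congr 1
        rw [Finset.mul_sum]
        apply Finset.sum_congr rfl
        intro j _
        ring
      have hsL : (∑ k ∈ Finset.range (L + 1 + 1), nn k) =
          nn 0 + ∑ k ∈ Finset.range (L + 1), nn (k + 1) := by
        rw [Finset.sum_range_succ' (fun k => nn k) (L + 1)]
        ring
      rw [hsum, hsL, pow_add]
      simp only [Fin.val_zero]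
      ring
  exact ⟨key L nn z, by simpa using key L nn 0⟩
end
end
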